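/- Let ℳ ⊆ ℝ^m, let ℒ ⊆ ℝ^m be a linear subspace, and let x* ∈ ℳ be a well-posed point, i.e., ℳ is a C² submanifold of dimension ρ in a neighborhood of x* and T_ℳ(x*) ∩ ℒ = {0}. Then the model is locally identifiable at x*: there exists an open neighborhood W of x* such that whenever x' ∈ ℳ ∩ W and v', v ∈ ℒ satisfy x* + v = x' + v', it follows that x' = x*. -/

import Mathlib

/-- If `x* ∈ ℳ` is a well-posed point — `ℳ` is a `C²` submanifold of
dimension `ρ` near `x*` (cut out locally by the `C²` submersion `φ : U → ℝ^{m-ρ}`) and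
the tangent space `T_ℳ(x*) = ker Dφ(x*)` meets the linear subspace `ℒ` only in `0` —
then the model is locally identifiable at `x*`: there is an open neighborhood `W` of
`x*` such that `x' ∈ ℳ ∩ W`, `v, v' ∈ ℒ` and `x* + v = x' + v'` imply `x' = x*`. -/
theorem locally_identifiable_of_wellPosed
    {m ρ : ℕ} {M : Set (Fin m → ℝ)} {L : Submodule ℝ (Fin m → ℝ)}
    {xstar : Fin m → ℝ} (hxstar : xstar ∈ M)
    {U : Set (Fin m → ℝ)} {φ : (Fin m → ℝ) → (Fin (m - ρ) → ℝ)}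
    (hU : IsOpen U) (hxU : xstar ∈ U)
    (hφ : ContDiffOn ℝ 2 φ U)
    (hsurj : ∀ y ∈ U, Function.Surjective (fderiv ℝ φ y))
    (hMU : M ∩ U = {y ∈ U | φ y = 0})
    (htan : LinearMap.ker (fderiv ℝ φ xstar).toLinearMap ⊓ L = ⊥) :
    ∃ W : Set (Fin m → ℝ), IsOpen W ∧ xstar ∈ W ∧
      ∀ x' ∈ M ∩ W, ∀ v ∈ L, ∀ v' ∈ L, xstar + v = x' + v' → x' = xstar := by
  classical
  -- choose a complement `L'` of `L` and the projection `Q` with kernel `L`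
  obtain ⟨L', hL'⟩ := Submodule.exists_isCompl L
  set Q : (Fin m → ℝ) →ₗ[ℝ] (Fin m → ℝ) :=
    L'.subtype.comp (Submodule.linearProjOfIsCompl L' L hL'.symm) with hQdef
  have hQker : LinearMap.ker Q = L := by
    rw [hQdef, LinearMap.ker_comp, Submodule.ker_subtype, Submodule.comap_bot]
    exact Submodule.linearProjOfIsCompl_ker hL'.symm
  set Qc : (Fin m → ℝ) →L[ℝ] (Fin m → ℝ) := LinearMap.toContinuousLinearMap Q with hQc
  -- the derivative of φ at x*
  set D : (Fin m → ℝ) →L[ℝ] (Fin (m - ρ) → ℝ) := fderiv ℝ φ xstar with hD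
  -- the map g = (φ, Q) has injective strict derivative T at x*
  set g : (Fin m → ℝ) → (Fin (m - ρ) → ℝ) × (Fin m → ℝ) := fun x => (φ x, Qc x) with hg
  set T : (Fin m → ℝ) →L[ℝ] (Fin (m - ρ) → ℝ) × (Fin m → ℝ) := D.prod Qc with hT
  have hφstrict : HasStrictFDerivAt φ D xstar := by
    have : ContDiffAt ℝ 2 φ xstar := hφ.contDiffAt (hU.mem_nhds hxU)
    exact this.hasStrictFDerivAt (by norm_num)
  have hgstrict : HasStrictFDerivAt g T xstar :=
    hφstrict.prodMk (Qc.hasStrictFDerivAt)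
  have hTker : LinearMap.ker (T : (Fin m → ℝ) →ₗ[ℝ] (Fin (m - ρ) → ℝ) × (Fin m → ℝ)) = ⊥ := by
    rw [← htan, ← hQker]
    ext x
    simp only [LinearMap.mem_ker, Submodule.mem_inf]
    constructor
    · intro h
      have := congrArg Prod.fst h
      have h2 := congrArg Prod.snd h
      exact ⟨this, h2⟩
    · rintro ⟨h1, h2⟩
      exact Prod.ext h1 h2
  obtain ⟨σ, hσ⟩ := (T : (Fin m → ℝ) →ₗ[ℝ] (Fin (m - ρ) → ℝ) × (Fin m → ℝ)).exists_leftInverse_of_injective hTker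
  set σc := LinearMap.toContinuousLinearMap σ with hσc
  -- h = σ ∘ g has strict derivative id at x*
  have hhstrict : HasStrictFDerivAt (fun x => σc (g x))
      ((ContinuousLinearEquiv.refl ℝ (Fin m → ℝ) :
        (Fin m → ℝ) ≃L[ℝ] (Fin m → ℝ)) : (Fin m → ℝ) →L[ℝ] (Fin m → ℝ)) xstar := by
    have := σc.hasStrictFDerivAt.comp xstar hgstrict
    refine this.congr_fderiv (Eq.symm ?_)
    ext x i
    have hx : σ (T x) = x := by
      have := LinearMap.congr_fun hσ x
      simpa using this
    simp only [ContinuousLinearEquiv.coe_refl', ContinuousLinearMap.coe_comp',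
      Function.comp_apply, id_eq]
    exact (congrFun hx i).symm
  set ph := hhstrict.toOpenPartialHomeomorph _
  have hsource : xstar ∈ ph.source := hhstrict.mem_toOpenPartialHomeomorph_source
  refine ⟨U ∩ ph.source, hU.inter ph.open_source, ⟨hxU, hsource⟩, ?_⟩
  rintro x' ⟨hx'M, hx'U, hx'src⟩ v hv v' hv' heq
  -- φ vanishes at both points
  have hφx' : φ x' = 0 := by
    have : x' ∈ M ∩ U := ⟨hx'M, hx'U⟩
    rw [hMU] at this; exact this.2
  have hφxs : φ xstar = 0 := by
    have : xstar ∈ M ∩ U := ⟨hxstar, hxU⟩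
    rw [hMU] at this; exact this.2
  -- x' - x* ∈ L, hence Q x' = Q x*
  have hdiff : x' - xstar ∈ L := by
    have : x' - xstar = v - v' := by
      have := heq
      funext i
      have h := congrFun this i
      simp only [Pi.add_apply] at h
      simp only [Pi.sub_apply]
      linarith
    rw [this]; exact L.sub_mem hv hv'
  have hQeq : Qc x' = Qc xstar := by
    have : Qc (x' - xstar) = 0 := by
      have : x' - xstar ∈ LinearMap.ker Q := by rw [hQker]; exact hdiff
      simpa [hQc] using this
    have h2 : Qc x' - Qc xstar = 0 := by rw [← map_sub]; exact this
    exact sub_eq_zero.mp h2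
  have hgeq : g x' = g xstar := by
    simp [hg, hφx', hφxs, hQeq]
  have hheq : σc (g x') = σc (g xstar) := by rw [hgeq]
  have hinj := ph.injOn
  have hcoe : ((ph : OpenPartialHomeomorph _ _) : _ → _) = fun x => σc (g x) :=
    hhstrict.toOpenPartialHomeomorph_coe
  exact hinj hx'src hsource (by rw [hcoe]; exact hheq)
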